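/- If n = 2^k for some integer k ≥ 2, then there is a 2-MDS code in the Hamming graph H(n,4) (an independent set of cardinality 4^{n−1}) that can be partitioned into 2^k codes, each of code distance at least 3. -/

import Mathlib

open SimpleGraph Finset

/-- The Hamming graph `H(n,4)`: vertices are `n`-tuples over a 4-element
alphabet, two tuples being adjacent iff they differ in exactly one coordinate. -/
def hammingGraph (n : ℕ) : SimpleGraph (Fin n → ZMod 4) :=
  SimpleGraph.fromRel (fun x y =>
    ∃ i, x i ≠ y i ∧ ∀ j, j ≠ i → x j = y j)

lemma adj_ham {n : ℕ} {x y : Fin n → ZMod 4} (h : (hammingGraph n).Adj x y) :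
    hammingDist x y ≤ 1 := by
  rw [hammingGraph, fromRel_adj] at h
  obtain ⟨hne, h | h⟩ := h <;> obtain ⟨i, hi, hj⟩ := h <;>
  · refine le_trans (Finset.card_le_card (fun j hjm => ?_)) (Finset.card_singleton i).le
    simp only [Finset.mem_filter, Finset.mem_univ, true_and] at hjm
    simp only [Finset.mem_singleton]
    by_contra hne'
    first
    | exact hjm ((hj j hne') ▸ rfl)
    | exact hjm ((hj j hne').symm ▸ rfl)

lemma walk_len {n : ℕ} {x y : Fin n → ZMod 4} (w : (hammingGraph n).Walk x y) :
    hammingDist x y ≤ w.length := by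
  induction w with
  | nil => simp
  | @cons a b c h p ih =>
    calc hammingDist a c ≤ hammingDist a b + hammingDist b c := hammingDist_triangle _ _ _
    _ ≤ 1 + p.length := Nat.add_le_add (adj_ham h) ih
    _ = (SimpleGraph.Walk.cons h p).length := by simp [Nat.add_comm]

lemma reach {n : ℕ} (x y : Fin n → ZMod 4) : (hammingGraph n).Reachable x y := by
  generalize h : hammingDist x y = d
  induction d using Nat.strong_induction_on generalizing x y with
  | _ d ih =>
  rcases Nat.eq_zero_or_pos d with rfl | hd
  · exact (hammingDist_eq_zero.mp h) ▸ Reachable.refl x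
  · have hne : ({i | x i ≠ y i} : Finset (Fin n)).Nonempty := by
      rw [← Finset.card_pos, ← hammingDist, h]; exact hd
    obtain ⟨i, hi⟩ := hne
    simp only [Finset.mem_filter, Finset.mem_univ, true_and] at hi
    set x' := Function.update x i (y i) with hx'
    have hadj : (hammingGraph n).Adj x x' := by
      rw [hammingGraph, fromRel_adj]
      constructor
      · intro hxy
        apply hi
        calc x i = x' i := by rw [hxy]
          _ = y i := by simp [hx']
      · left
        exact ⟨i, by simpa [hx'] using hi, fun j hj => by simp [hx', Function.update_of_ne hj]⟩
    have hlt : hammingDist x' y < d := by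
      rw [← h]
      apply Finset.card_lt_card
      constructor
      · intro j hj
        simp only [Finset.mem_filter, Finset.mem_univ, true_and] at hj ⊢
        rcases eq_or_ne j i with rfl | hji
        · simp [hx'] at hj
        · rwa [hx', Function.update_of_ne hji] at hj
      · intro hsub
        have := hsub (by simp [hi] : i ∈ ({j | x j ≠ y j} : Finset (Fin n)))
        simp [hx'] at this
    exact (hadj.reachable).trans (ih _ hlt x' y rfl)

lemma three_le_dist {n : ℕ} {x y : Fin n → ZMod 4} (h : 3 ≤ hammingDist x y) :
    3 ≤ (hammingGraph n).dist x y := by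
  obtain ⟨w, hw⟩ := (reach x y).exists_walk_length_eq_dist
  exact h.trans ((walk_len w).trans_eq hw)

def eAux : ZMod 4 ≃ (ZMod 2 × ZMod 2) where
  toFun v := ((v.val % 2 : ℕ), ((v.val / 2 : ℕ) : ZMod 2))
  invFun p := ((p.1.val + 2 * p.2.val : ℕ) : ZMod 4)
  left_inv := by decide
  right_inv := by decide

lemma sum_sub_eq {n : ℕ} {M : Type*} [AddCommGroup M] (f : Fin n → ZMod 4 → M)
    (x y : Fin n → ZMod 4) (s : Finset (Fin n)) (h : ∀ j ∉ s, x j = y j) :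
    (∑ j, f j (x j)) - (∑ j, f j (y j)) = ∑ j ∈ s, (f j (x j) - f j (y j)) := by
  rw [← Finset.sum_sub_distrib]
  exact (Finset.sum_subset (Finset.subset_univ s) (fun j _ hj => by rw [h j hj]; simp)).symm

theorem aux {n : ℕ} {F : Type} [Field F] [CharP F 2] (a : Fin n ≃ F) (θ : F)
    (h0 : θ ≠ 0) (h1 : θ ≠ 1) :
    ∃ C : Set (Fin n → ZMod 4),
      (∀ x ∈ C, ∀ y ∈ C, ¬ (hammingGraph n).Adj x y) ∧
      C.ncard = 4 ^ (n - 1) ∧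
      ∃ L : Fin n → Set (Fin n → ZMod 4),
        (∀ i, (L i).Nonempty) ∧
        (∀ i j, i ≠ j → Disjoint (L i) (L j)) ∧
        (⋃ i, L i) = C ∧
        (∀ i, ∀ x ∈ L i, ∀ y ∈ L i, x ≠ y → 3 ≤ (hammingGraph n).dist x y) := by
  classical
  set e := eAux with he
  let c : ZMod 2 →+* F := ZMod.castHom (dvd_refl 2) F
  set ι : ZMod 2 × ZMod 2 → F := fun p => c p.1 + c p.2 * θ with hi_def
  have ιsub : ∀ p q, ι (p - q) = ι p - ι q := by
    intro p q; simp only [hi_def, Prod.fst_sub, Prod.snd_sub, map_sub]; ring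
  have ι0 : ι 0 = 0 := by simp [hi_def]
  have ιne : ∀ p : ZMod 2 × ZMod 2, p ≠ 0 → ι p ≠ 0 := by
    intro p hp
    have h2 : ∀ s : ZMod 2, s = 0 ∨ s = 1 := by decide
    obtain ⟨s, t⟩ := p
    rcases h2 s with rfl | rfl <;> rcases h2 t with rfl | rfl
    · simp at hp
    · simpa [hi_def] using h0
    · simp [hi_def]
    · intro hc
      simp only [hi_def, map_one, one_mul] at hc
      apply h1
      have hθ : θ = -1 := by linear_combination hc
      rw [hθ, CharTwo.neg_eq]
  refine ⟨{x | ∑ j, e (x j) = 0}, ?_, ?_,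
    fun i => {x | ∑ j, e (x j) = 0 ∧ ∑ j, a j * ι (e (x j)) = a i}, ?_, ?_, ?_, ?_⟩
  · rintro x hx y hy hadj
    rw [hammingGraph, fromRel_adj] at hadj
    obtain ⟨hne, hrel⟩ := hadj
    obtain ⟨i, hi, hagree⟩ : ∃ i, x i ≠ y i ∧ ∀ j, j ≠ i → x j = y j := by
      rcases hrel with ⟨i, hi, hj⟩ | ⟨i, hi, hj⟩
      exacts [⟨i, hi, hj⟩, ⟨i, Ne.symm hi, fun j hj' => (hj j hj').symm⟩]
    have hss := sum_sub_eq (fun _ v => e v) x y {i}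
      (fun j hj => hagree j (by simpa using hj))
    rw [Set.mem_setOf_eq] at hx hy
    rw [hx, hy, sub_self, Finset.sum_singleton] at hss
    exact hi (e.injective (sub_eq_zero.mp hss.symm))
  · have hn : n ≠ 0 := by
      rintro rfl
      exact (a.symm 0).elim0
    obtain ⟨m, rfl⟩ : ∃ m, n = m + 1 :=
      ⟨n - 1, (Nat.succ_pred_eq_of_pos (Nat.pos_of_ne_zero hn)).symm⟩
    have key : ∀ v : ZMod 2 × ZMod 2, v + v = 0 := by decide
    let E : {x : Fin (m+1) → ZMod 4 // ∑ j, e (x j) = 0} ≃ (Fin m → ZMod 4) :=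
      { toFun := fun x j => x.1 j.succ
        invFun := fun y => ⟨Fin.cons (e.symm (∑ j, e (y j))) y, by
          rw [Fin.sum_univ_succ]
          simp only [Fin.cons_zero, Fin.cons_succ, Equiv.apply_symm_apply]
          exact key _⟩
        left_inv := fun x => by
          apply Subtype.ext
          have hx := x.2
          rw [Fin.sum_univ_succ] at hx
          have hS : e (x.1 0) = ∑ j : Fin m, e (x.1 j.succ) := by
            have h3 : -(∑ j : Fin m, e (x.1 j.succ)) = ∑ j : Fin m, e (x.1 j.succ) :=
              neg_eq_of_add_eq_zero_left (key _)
            rw [← h3]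
            exact eq_neg_of_add_eq_zero_left hx
          funext j
          refine Fin.cases ?_ (fun j => by simp) j
          simp only [Fin.cons_zero, ← hS, Equiv.symm_apply_apply]
        right_inv := fun y => by funext j; simp }
    have h4 : Nat.card {x : Fin (m+1) → ZMod 4 // ∑ j, e (x j) = 0} = 4 ^ m := by
      rw [Nat.card_congr E, Nat.card_eq_fintype_card]
      simp
    rw [← Nat.card_coe_set_eq]
    exact h4
  · intro i
    have e0 : e (0 : ZMod 4) = 0 := by decide
    rcases eq_or_ne (a i) 0 with h | h
    · refine ⟨fun _ => (0 : ZMod 4), ?_, ?_⟩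
      · simp [e0]
      · simp [e0, ι0, h]
    · have hne : a.symm 0 ≠ i := by
        intro hc
        exact h (by rw [← hc, Equiv.apply_symm_apply])
      have e1 : e (1 : ZMod 4) = (1, 0) := by decide
      have ι1 : ι (1, 0) = 1 := by simp [hi_def]
      refine ⟨fun j => if j = a.symm 0 ∨ j = i then (1 : ZMod 4) else 0, ?_, ?_⟩
      · beta_reduce
        rw [← Finset.sum_subset (Finset.subset_univ ({a.symm 0, i} : Finset (Fin (_))))
            (fun j _ hj => by
              simp only [Finset.mem_insert, Finset.mem_singleton] at hj
              beta_reduce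
              rw [if_neg (by tauto)]
              exact e0)]
        rw [Finset.sum_pair hne]
        rw [if_pos (Or.inl rfl), if_pos (Or.inr rfl), e1]
        decide
      · beta_reduce
        rw [← Finset.sum_subset (Finset.subset_univ ({a.symm 0, i} : Finset (Fin (_))))
            (fun j _ hj => by
              simp only [Finset.mem_insert, Finset.mem_singleton] at hj
              beta_reduce
              rw [if_neg (by tauto)]
              rw [e0, ι0, mul_zero])]
        rw [Finset.sum_pair hne]
        rw [if_pos (Or.inl rfl), if_pos (Or.inr rfl), e1, ι1]
        simp
  · intro i j hij
    rw [Set.disjoint_left]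
    rintro x ⟨_, hx2⟩ ⟨_, hy2⟩
    exact hij (a.injective (hx2.symm.trans hy2))
  · ext x
    simp only [Set.mem_iUnion, Set.mem_setOf_eq]
    constructor
    · rintro ⟨i, h1, _⟩; exact h1
    · intro hx1
      exact ⟨a.symm (∑ j, a j * ι (e (x j))), hx1, by rw [Equiv.apply_symm_apply]⟩
  · rintro i x ⟨hx1, hx2⟩ y ⟨hy1, hy2⟩ hxy
    apply three_le_dist
    by_contra hlt
    push_neg at hlt
    set s : Finset (Fin n) := {j | x j ≠ y j} with hs
    have hagree : ∀ j ∉ s, x j = y j := by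
      intro j hj
      simpa [hs] using hj
    have hmem : ∀ j ∈ s, x j ≠ y j := by
      intro j hj
      simpa [hs] using hj
    have h1 := sum_sub_eq (fun _ v => e v) x y s hagree
    rw [hx1, hy1, sub_self] at h1
    have h2 := sum_sub_eq (fun j v => a j * ι (e v)) x y s hagree
    rw [hx2, hy2, sub_self] at h2
    have hcard2 : s.card ≤ 2 := by
      have hd : hammingDist x y = s.card := rfl
      omega
    have hpos : 0 < s.card := by
      rw [Finset.card_pos]
      obtain ⟨j, hj⟩ := Function.ne_iff.mp hxy
      exact ⟨j, by simp [hs, hj]⟩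
    have hc12 : s.card = 1 ∨ s.card = 2 := by omega
    rcases hc12 with hc | hc
    · obtain ⟨j0, hj0⟩ := Finset.card_eq_one.mp hc
      rw [hj0, Finset.sum_singleton] at h1
      exact hmem j0 (by rw [hj0]; exact Finset.mem_singleton_self j0)
        (e.injective (sub_eq_zero.mp h1.symm))
    · obtain ⟨j1, j2, hj12, hjeq⟩ := Finset.card_eq_two.mp hc
      rw [hjeq, Finset.sum_pair hj12] at h1 h2
      have hq1 : e (x j1) - e (y j1) ≠ 0 := by
        refine fun hc' => hmem j1 (by rw [hjeq]; simp) (e.injective (sub_eq_zero.mp hc'))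
      have hq2 : e (x j2) - e (y j2) = -(e (x j1) - e (y j1)) :=
        eq_neg_of_add_eq_zero_right h1.symm
      have hA : ι (e (x j1)) - ι (e (y j1)) = ι (e (x j1) - e (y j1)) :=
        (ιsub _ _).symm
      have hB : ι (e (x j2)) - ι (e (y j2)) = -ι (e (x j1) - e (y j1)) := by
        rw [← ιsub, hq2, show -(e (x j1) - e (y j1)) = 0 - (e (x j1) - e (y j1)) by ring,
          ιsub, ι0, zero_sub]
      have hkey : (a j1 - a j2) * ι (e (x j1) - e (y j1)) = 0 := by
        linear_combination (-1 : F) * h2 - a j1 * hA - a j2 * hB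
      rcases mul_eq_zero.mp hkey with hz | hz
      · exact hj12 (a.injective (sub_eq_zero.mp hz))
      · exact ιne _ hq1 hz

theorem stmt_12 (k : ℕ) (hk : 2 ≤ k) :
    ∃ C : Set (Fin (2 ^ k) → ZMod 4),
      (∀ x ∈ C, ∀ y ∈ C, ¬ (hammingGraph (2 ^ k)).Adj x y) ∧
      C.ncard = 4 ^ (2 ^ k - 1) ∧
      ∃ L : Fin (2 ^ k) → Set (Fin (2 ^ k) → ZMod 4),
        (∀ i, (L i).Nonempty) ∧
        (∀ i j, i ≠ j → Disjoint (L i) (L j)) ∧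
        (⋃ i, L i) = C ∧
        (∀ i, ∀ x ∈ L i, ∀ y ∈ L i, x ≠ y →
          3 ≤ (hammingGraph (2 ^ k)).dist x y) := by
  classical
  haveI : Fact (Nat.Prime 2) := ⟨Nat.prime_two⟩
  set F := GaloisField 2 k with hF
  haveI : Fintype F := Fintype.ofFinite F
  have hcard : Fintype.card F = 2 ^ k := by
    rw [← Nat.card_eq_fintype_card]
    exact GaloisField.card 2 k (by omega)
  have a : Fin (2 ^ k) ≃ F := Fintype.equivOfCardEq (by simp [hcard])
  obtain ⟨θ, hθ0, hθ1⟩ : ∃ θ : F, θ ≠ 0 ∧ θ ≠ 1 := by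
    by_contra hcon
    push_neg at hcon
    have hsub : (Finset.univ : Finset F) ⊆ {0, 1} := by
      intro θ _
      rcases eq_or_ne θ 0 with rfl | h
      · exact Finset.mem_insert_self _ _
      · simp [hcon θ h]
    have hle : Fintype.card F ≤ 2 := by
      calc Fintype.card F = (Finset.univ : Finset F).card := rfl
        _ ≤ ({0, 1} : Finset F).card := Finset.card_le_card hsub
        _ ≤ 2 := (Finset.card_insert_le _ _).trans (by simp)
    have : 4 ≤ 2 ^ k := by
      calc 4 = 2 ^ 2 := rfl
        _ ≤ 2 ^ k := Nat.pow_le_pow_right (by norm_num) hk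
    omega
  exact aux a θ hθ0 hθ1
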